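/- Let y be a nonzero real number. Then the series over natural numbers n whose n-th term is | 1/((n+1)·tan(|y|·ln((n+2)/(n+1)))) − sqrt( 1/n² + 1/(n²·tan(|y|·ln((n+1)/n))²) ) | (terms taken for n larger than a suitable index so that all denominators are nonzero) is summable. -/

import Mathlib

set_option maxHeartbeats 1000000


open Filter

lemma my_log_bounds {u : ℝ} (hu : 0 < u) (hu2 : u ≤ 1/2) :
    u - u^2/2 - 2*u^3 ≤ Real.log (1+u) ∧ Real.log (1+u) ≤ u - u^2/2 + 2*u^3 := by
  have h := Real.abs_log_sub_add_sum_range_le (x := -u)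
    (by rw [abs_neg, abs_of_pos hu]; linarith) 2
  rw [Finset.sum_range_succ, Finset.sum_range_succ, Finset.sum_range_zero] at h
  rw [abs_neg, abs_of_pos hu] at h
  rw [show (1 : ℝ) - -u = 1 + u by ring] at h
  have h2 := abs_le.mp h
  push_cast at h2
  have hd : u^3/(1-u) ≤ 2*u^3 := by
    rw [div_le_iff₀ (by linarith)]
    nlinarith [mul_nonneg (pow_pos hu 3).le (show (0:ℝ) ≤ 1 - 2*u by linarith)]
  constructor <;> nlinarith [h2.1, h2.2]

lemma my_tan_bounds {t : ℝ} (ht : 0 < t) (ht1 : t ≤ 1) :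
    t - t^3 ≤ Real.tan t ∧ Real.tan t ≤ t + 2*t^3 := by
  have hcoslb := Real.one_sub_sq_div_two_le_cos (x := t)
  have hcos0 : 0 < Real.cos t := by nlinarith
  have hsin_lt : Real.sin t < t := Real.sin_lt ht
  have hsin_gt : t - t^3/4 < Real.sin t := by
    have := Real.sin_gt_sub_cube ht; nlinarith [pow_pos ht 3]
  have hsin0 : 0 < Real.sin t := by nlinarith
  have hcos1 : Real.cos t ≤ 1 := Real.cos_le_one t
  rw [Real.tan_eq_sin_div_cos]
  constructor
  · rw [le_div_iff₀ hcos0]; nlinarith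
  · rw [div_le_iff₀ hcos0]
    nlinarith [mul_nonneg (pow_pos ht 3).le (show (0:ℝ) ≤ 3/2 - t^2 by nlinarith),
      mul_nonneg (by positivity : (0:ℝ) ≤ t + 2*t^3)
        (show (0:ℝ) ≤ Real.cos t - (1 - t^2/2) by linarith)]

lemma my_aux1 {u w : ℝ} (hu0 : 0 < u) (hu2 : u ≤ 1/2) (hw0 : 0 ≤ w) (hw1 : w ≤ u/4) :
    1 ≤ (1 + u/2 + (w + 2*u^2)) * (1 - u/2 - w) := by
  nlinarith [mul_le_mul_of_nonneg_left hw1 hu0.le,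
    mul_le_mul_of_nonneg_right hu2 (mul_nonneg hu0.le hu0.le),
    mul_le_mul_of_nonneg_right hw1 hw0,
    mul_le_mul_of_nonneg_left hw1 (mul_nonneg hu0.le hu0.le), sq_nonneg u]

lemma my_aux2 {u w : ℝ} : (1 + u/2 - w) * (1 - u/2 + w) ≤ 1 := by
  nlinarith [sq_nonneg (u/2 - w)]

lemma my_A_approx {a x : ℝ} (ha : 0 < a) (hx2 : 2 ≤ x) (hxa : a ≤ x)
    (hxK : 4*(2+2*a^2) ≤ x) :
    0 < x * Real.tan (a * Real.log ((x+1)/x)) ∧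
    |1/(x * Real.tan (a * Real.log ((x+1)/x))) - 1/a - 1/(2*a*x)| ≤
      ((2+2*a^2)+2)/a / x^2 := by
  have hx0 : (0:ℝ) < x := by linarith
  obtain ⟨K, hK⟩ : ∃ K : ℝ, K = 2+2*a^2 := ⟨_, rfl⟩
  rw [← hK] at hxK ⊢
  have hK2 : 2 ≤ K := by rw [hK]; nlinarith
  obtain ⟨u, hu_def⟩ : ∃ u : ℝ, u = 1/x := ⟨_, rfl⟩
  have hu0 : 0 < u := by rw [hu_def]; positivity
  have hux : x * u = 1 := by rw [hu_def]; field_simp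
  have hu2 : u ≤ 1/2 := by
    rw [hu_def, div_le_div_iff₀ hx0 (by norm_num)]; linarith
  have hKu : K * u ≤ 1/4 := by
    rw [hu_def, mul_one_div, div_le_div_iff₀ hx0 (by norm_num)]; nlinarith
  have hKuu : K * u^2 ≤ u/4 := by nlinarith [mul_le_mul_of_nonneg_right hKu hu0.le]
  have hKuu0 : 0 ≤ K * u^2 := by positivity
  have hdiv : (x+1)/x = 1 + u := by rw [hu_def]; field_simp
  rw [hdiv]
  obtain ⟨hlog1, hlog2⟩ := my_log_bounds hu0 hu2
  obtain ⟨L, hL⟩ : ∃ L : ℝ, L = Real.log (1+u) := ⟨_, rfl⟩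
  rw [← hL] at hlog1 hlog2 ⊢
  have hLu : L ≤ u := by
    rw [hL]
    have := Real.log_le_sub_one_of_pos (show (0:ℝ) < 1+u by linarith)
    linarith
  have hL0 : 0 < L := by nlinarith
  obtain ⟨t, ht_def⟩ : ∃ t : ℝ, t = a * L := ⟨_, rfl⟩
  rw [← ht_def]
  have ht0 : 0 < t := by rw [ht_def]; positivity
  have htau : t ≤ a * u := by rw [ht_def]; nlinarith
  have ht1 : t ≤ 1 := by
    calc t ≤ a * u := htau
    _ ≤ x * u := by nlinarith
    _ = 1 := hux
  obtain ⟨htan1, htan2⟩ := my_tan_bounds ht0 ht1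
  have ht3 : t^3 ≤ a^3 * u^3 := by
    calc t^3 ≤ (a*u)^3 := pow_le_pow_left₀ ht0.le htau 3
    _ = a^3*u^3 := by ring
  obtain ⟨T, hT⟩ : ∃ T : ℝ, T = Real.tan t := ⟨_, rfl⟩
  rw [← hT] at htan1 htan2 ⊢
  have hD0 : (0:ℝ) < 1 - u/2 - K*u^2 := by linarith
  have hD'0 : (0:ℝ) < 1 - u/2 + K*u^2 := by linarith
  have hid1 : x*(u - u^2/2 - 2*u^3) = 1 - u/2 - 2*u^2 := by
    rw [hu_def]; field_simp
  have hid2 : x*(u - u^2/2 + 2*u^3) = 1 - u/2 + 2*u^2 := by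
    rw [hu_def]; field_simp
  have hid3 : x*(a^3*u^3) = a^3*u^2 := by
    rw [hu_def]; field_simp
  have step1 : x*(t - t^3) ≤ x*T := mul_le_mul_of_nonneg_left htan1 hx0.le
  have step1' : x*T ≤ x*(t + 2*t^3) := mul_le_mul_of_nonneg_left htan2 hx0.le
  have step2 : x*t^3 ≤ a^3*u^2 := by
    calc x*t^3 ≤ x*(a^3*u^3) := mul_le_mul_of_nonneg_left ht3 hx0.le
    _ = a^3*u^2 := hid3
  have step2' : 0 ≤ x*t^3 := by positivity
  have step3 : a*(1 - u/2 - 2*u^2) ≤ x*t := by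
    calc a*(1-u/2-2*u^2) = a*(x*(u-u^2/2-2*u^3)) := by rw [hid1]
    _ ≤ a*(x*L) := by
        exact mul_le_mul_of_nonneg_left
          (mul_le_mul_of_nonneg_left hlog1 hx0.le) ha.le
    _ = x*t := by rw [ht_def]; ring
  have step3' : x*t ≤ a*(1 - u/2 + 2*u^2) := by
    calc x*t = a*(x*L) := by rw [ht_def]; ring
    _ ≤ a*(x*(u-u^2/2+2*u^3)) := by
        exact mul_le_mul_of_nonneg_left
          (mul_le_mul_of_nonneg_left hlog2 hx0.le) ha.le
    _ = a*(1-u/2+2*u^2) := by rw [hid2]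
  have ha3u : 0 ≤ a^3*u^2 := by positivity
  have hTlb : a * (1 - u/2 - K*u^2) ≤ x * T := by
    have hexp : x*(t - t^3) = x*t - x*t^3 := by ring
    rw [hexp] at step1
    have : a*(1 - u/2 - K*u^2) ≤ a*(1-u/2-2*u^2) - a^3*u^2 := by
      rw [hK]; linarith [mul_nonneg (pow_pos ha 3).le (sq_nonneg u)]
    linarith
  have hTub : x * T ≤ a * (1 - u/2 + K*u^2) := by
    have hexp : x*(t + 2*t^3) = x*t + 2*(x*t^3) := by ring
    rw [hexp] at step1'
    have : a*(1-u/2+2*u^2) + 2*(a^3*u^2) ≤ a*(1 - u/2 + K*u^2) := by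
      rw [hK]; linarith [mul_nonneg (pow_pos ha 3).le (sq_nonneg u)]
    linarith
  have hxT0 : 0 < x * T := lt_of_lt_of_le (by positivity) hTlb
  refine ⟨hxT0, ?_⟩
  obtain ⟨A, hA_def⟩ : ∃ A : ℝ, A = 1/(x*T) := ⟨_, rfl⟩
  rw [← hA_def]
  have haA_ub : a * A ≤ 1 + u/2 + (K+2)*u^2 := by
    have h1 : a * A ≤ 1/(1 - u/2 - K*u^2) := by
      rw [hA_def, mul_one_div, div_le_div_iff₀ hxT0 hD0]
      linarith
    have h2 : 1/(1 - u/2 - K*u^2) ≤ 1 + u/2 + (K+2)*u^2 := by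
      rw [div_le_iff₀ hD0, show (K+2)*u^2 = K*u^2 + 2*u^2 by ring]
      exact my_aux1 hu0 hu2 hKuu0 hKuu
    linarith
  have haA_lb : 1 + u/2 - (K+2)*u^2 ≤ a * A := by
    have h1 : 1/(1 - u/2 + K*u^2) ≤ a * A := by
      rw [hA_def, mul_one_div, div_le_div_iff₀ hD'0 hxT0]
      linarith
    have h2 : 1 + u/2 - K*u^2 ≤ 1/(1 - u/2 + K*u^2) := by
      rw [le_div_iff₀ hD'0]
      exact my_aux2
    nlinarith [sq_nonneg u]
  have key : |a*A - 1 - u/2| ≤ (K+2)*u^2 :=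
    abs_le.mpr ⟨by linarith, by linarith⟩
  have heq : A - 1/a - 1/(2*a*x) = (a*A - 1 - u/2)/a := by
    rw [hu_def] at key ⊢
    field_simp
  have heq2 : (K+2)/a/x^2 = ((K+2)*u^2)/a := by
    rw [hu_def]
    field_simp
  rw [heq, heq2, abs_div, abs_of_pos ha]
  gcongr


lemma my_assemble {a x A' B S K : ℝ} (ha : 0 < a) (hx2 : 2 ≤ x) (hxK : 4*K ≤ x)
    (hK2 : 2 ≤ K)
    (hA' : |A' - 1/a - 1/(2*a*(x+1))| ≤ (K+2)/a/(x+1)^2)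
    (hB : |B - 1/a - 1/(2*a*x)| ≤ (K+2)/a/x^2)
    (hS1 : B ≤ S) (hS2 : S ≤ B + 1/x^2/(2*B)) (hBpos : 0 < B) :
    |A' - S| ≤ (2*((K+2)/a) + 1/(2*a) + a) * (1/x^2) := by
  have hx0 : (0:ℝ) < x := by linarith
  have hhalf : 2*(1/(2*a)) = 1/a := by field_simp
  have h8K : 4*K*2 ≤ x*x := mul_le_mul hxK hx2 (by norm_num) hx0.le
  have hKx2 : (K+2)/a/x^2 ≤ 1/(2*a) := by
    rw [div_div, div_le_div_iff₀ (by positivity) (by positivity)]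
    have ha1 := mul_le_mul_of_nonneg_left h8K ha.le
    have ha2 := mul_le_mul_of_nonneg_left hK2 ha.le
    nlinarith [mul_nonneg ha.le (mul_nonneg hx0.le hx0.le)]
  have hpos0 : (0:ℝ) ≤ 1/(2*a*x) := by positivity
  have hB1 := (abs_le.mp hB).1
  have hB2 := (abs_le.mp hB).2
  have hA'1 := (abs_le.mp hA').1
  have hA'2 := (abs_le.mp hA').2
  have hBlb : 1/(2*a) ≤ B := by linarith
  have h2B : 1/(2*B) ≤ a := by
    rw [div_le_iff₀ (by positivity)]
    have h1 := mul_le_mul_of_nonneg_left hBlb (by positivity : (0:ℝ) ≤ 2*a)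
    have h2 : (2*a)*(1/(2*a)) = 1 := by field_simp
    nlinarith
  have hSub : S ≤ B + a*(1/x^2) := by
    have e : 1/x^2/(2*B) = (1/x^2)*(1/(2*B)) := by ring
    have h4 := mul_le_mul_of_nonneg_left h2B (by positivity : (0:ℝ) ≤ 1/x^2)
    rw [e] at hS2
    nlinarith
  have e0 : 1/(2*a*x) - 1/(2*a*(x+1)) = 1/(2*a)*(1/(x*(x+1))) := by
    field_simp
    ring
  have e1 : 1/(2*a*x) - 1/(2*a*(x+1)) ≤ 1/(2*a)*(1/x^2) := by
    rw [e0]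
    have h2 : 1/(x*(x+1)) ≤ 1/x^2 := by
      apply one_div_le_one_div_of_le (by positivity)
      nlinarith
    exact mul_le_mul_of_nonneg_left h2 (by positivity)
  have e2 : 0 ≤ 1/(2*a*x) - 1/(2*a*(x+1)) := by
    rw [e0]; positivity
  have hm0 : (0:ℝ) ≤ (K+2)/a := by
    apply div_nonneg _ ha.le; linarith
  have hmono : (K+2)/a/(x+1)^2 ≤ (K+2)/a/x^2 := by
    have hm1 : 1/(x+1)^2 ≤ 1/x^2 := by
      apply one_div_le_one_div_of_le (by positivity); nlinarith
    calc (K+2)/a/(x+1)^2 = ((K+2)/a)*(1/(x+1)^2) := by ring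
    _ ≤ ((K+2)/a)*(1/x^2) := mul_le_mul_of_nonneg_left hm1 hm0
    _ = (K+2)/a/x^2 := by ring
  have hra : (0:ℝ) ≤ a*(1/x^2) := by positivity
  have hrb : (0:ℝ) ≤ 1/(2*a)*(1/x^2) := by positivity
  have eqgoal : (2*((K+2)/a) + 1/(2*a) + a) * (1/x^2)
      = 2*((K+2)/a/x^2) + 1/(2*a)*(1/x^2) + a*(1/x^2) := by ring
  rw [eqgoal, abs_le]
  constructor
  · linarith
  · linarith

lemma my_sqrt_bounds {B h : ℝ} (hB : 0 < B) (hh : 0 ≤ h) :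
    B ≤ Real.sqrt (h + B^2) ∧ Real.sqrt (h + B^2) ≤ B + h/(2*B) := by
  constructor
  · rw [show B = Real.sqrt (B^2) from (Real.sqrt_sq hB.le).symm]
    exact Real.sqrt_le_sqrt (by nlinarith [Real.sqrt_sq hB.le])
  · have h2 : h + B^2 ≤ (B + h/(2*B))^2 := by
      have e : (B + h/(2*B))^2 = B^2 + h + (h/(2*B))^2 := by field_simp; ring
      nlinarith [sq_nonneg (h/(2*B))]
    calc Real.sqrt (h + B^2) ≤ Real.sqrt ((B + h/(2*B))^2) := Real.sqrt_le_sqrt h2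
    _ = B + h/(2*B) := Real.sqrt_sq (by positivity)

lemma my_main_bound {a x : ℝ} (ha : 0 < a) (hx2 : 2 ≤ x) (hxa : a ≤ x)
    (hxK : 4*(2+2*a^2) ≤ x) :
    |1/((x+1) * Real.tan (a * Real.log ((x+2)/(x+1)))) -
      Real.sqrt (1/x^2 + 1/(x^2 * Real.tan (a * Real.log ((x+1)/x))^2))| ≤
    (2*(((2+2*a^2)+2)/a) + 1/(2*a) + a) * (1/x^2) := by
  have hx0 : (0:ℝ) < x := by linarith
  obtain ⟨hxT0, hB⟩ := my_A_approx ha hx2 hxa hxK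
  obtain ⟨hxT0', hA'⟩ := my_A_approx ha (by linarith : (2:ℝ) ≤ x+1)
    (by linarith : a ≤ x+1) (by linarith : 4*(2+2*a^2) ≤ x+1)
  rw [show x+1+1 = x+2 by ring] at hA'
  have hrw : 1/(x^2 * Real.tan (a * Real.log ((x+1)/x))^2)
      = (1/(x * Real.tan (a * Real.log ((x+1)/x))))^2 := by
    rw [div_pow, one_pow, mul_pow]
  rw [hrw]
  have hBpos : 0 < 1/(x * Real.tan (a * Real.log ((x+1)/x))) := one_div_pos.mpr hxT0
  obtain ⟨hS1, hS2⟩ := my_sqrt_bounds hBpos (by positivity : (0:ℝ) ≤ 1/x^2)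
  exact my_assemble ha hx2 hxK (by nlinarith [sq_nonneg a]) hA' hB hS1 hS2 hBpos

/-- The modulus of the increment `δ_n(z)` of the radial-convergence construction for
`z = 1 + i·y`:
`|δ_n| = |1/((n+1)·tan(|y|·ln((n+2)/(n+1)))) − √(1/n² + 1/(n²·tan(|y|·ln((n+1)/n))²))|`. -/
noncomputable def absDeltaLineOne (y : ℝ) (n : ℕ) : ℝ :=
  |1 / (((n : ℝ) + 1) * Real.tan (|y| * Real.log (((n : ℝ) + 2) / ((n : ℝ) + 1)))) -
    Real.sqrt (1 / (n : ℝ) ^ 2 +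
      1 / ((n : ℝ) ^ 2 * Real.tan (|y| * Real.log (((n : ℝ) + 1) / (n : ℝ))) ^ 2))|

/-- For `y ≠ 0`, the series of the moduli `|δ_n|` (terms taken beyond a suitable index
so that all denominators are nonzero) is summable. -/
theorem absDeltaLineOne_summable (y : ℝ) (hy : y ≠ 0) :
    ∃ n₀ : ℕ, Summable (fun n : ℕ => absDeltaLineOne y (n + n₀)) := by
  have ha : 0 < |y| := abs_pos.mpr hy
  obtain ⟨a, ha_def⟩ : ∃ a : ℝ, a = |y| := ⟨_, rfl⟩
  rw [← ha_def] at ha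
  refine ⟨2 + ⌈a⌉₊ + ⌈4*(2+2*a^2)⌉₊, ?_⟩
  set n₀ := 2 + ⌈a⌉₊ + ⌈4*(2+2*a^2)⌉₊ with hn₀
  have hbound : ∀ n : ℕ, absDeltaLineOne y (n + n₀) ≤
      (2*(((2+2*a^2)+2)/a) + 1/(2*a) + a) * (1/((n + n₀ : ℕ):ℝ)^2) := by
    intro n
    have hx2 : (2:ℝ) ≤ ((n + n₀ : ℕ):ℝ) := by
      have h : (2:ℕ) ≤ n + n₀ := by omega
      exact_mod_cast h
    have hxa : a ≤ ((n + n₀ : ℕ):ℝ) := by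
      calc a ≤ (⌈a⌉₊:ℝ) := Nat.le_ceil a
      _ ≤ ((n + n₀ : ℕ):ℝ) := by exact_mod_cast (by omega : ⌈a⌉₊ ≤ n + n₀)
    have hxK : 4*(2+2*a^2) ≤ ((n + n₀ : ℕ):ℝ) := by
      calc 4*(2+2*a^2) ≤ (⌈4*(2+2*a^2)⌉₊:ℝ) := Nat.le_ceil _
      _ ≤ ((n + n₀ : ℕ):ℝ) := by exact_mod_cast (by omega : ⌈4*(2+2*a^2)⌉₊ ≤ n + n₀)
    unfold absDeltaLineOne
    rw [← ha_def]
    exact my_main_bound ha hx2 hxa hxK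
  apply Summable.of_nonneg_of_le (fun n => abs_nonneg _) hbound
  have hsum : Summable (fun n : ℕ => 1/((n:ℝ))^2) :=
    Real.summable_one_div_nat_pow.mpr one_lt_two
  exact ((summable_nat_add_iff n₀).mpr hsum).mul_left _
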